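/- In a coordination game with bonuses on a simple directed cycle, in every Nash equilibrium each player's payoff is at least the maximum bonus available to her, i.e., p_i(s) ≥ max_{c ∈ A(i)} β(i, c); consequently, a Nash equilibrium s fails to be a strong equilibrium only if there is a joint strategy giving every player the payoff max_{c ∈ A(i)} β(i, c) + 1, which requires all players to choose one common colour that has maximal bonus for every player. -/

import Mathlib

open Finset

/-- Payoff in a coordination game with bonuses on the simple directed cycle
`1 → 2 → ⋯ → n → 1` (nodes modelled as `Fin n`, with `i - 1` the predecessor
of `i` on the cycle): the bonus of `i` for its colour, plus `1` if `i` chose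
the same colour as its predecessor. -/
def cycPayoff {n : ℕ} [NeZero n] {C : Type} [DecidableEq C]
    (β : Fin n → C → ℕ) (s : Fin n → C) (i : Fin n) : ℕ :=
  β i (s i) + (if s (i - 1) = s i then 1 else 0)

/-- A colouring is valid if every node chooses a colour available to it. -/
def Valid {n : ℕ} {C : Type} (A : Fin n → Finset C) (s : Fin n → C) : Prop :=
  ∀ i, s i ∈ A i

/-- `s'` is a profitable deviation (of the non-empty coalition on which `s`
and `s'` differ) from `s`: every deviating player strictly improves. -/
def ProfDev {n : ℕ} {C : Type} (p : (Fin n → C) → Fin n → ℕ)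
    (s s' : Fin n → C) : Prop :=
  s ≠ s' ∧ ∀ i, s i ≠ s' i → p s i < p s' i

/-- A strong equilibrium: no coalition has a profitable deviation. -/
def StrongEq {n : ℕ} {C : Type} (A : Fin n → Finset C)
    (p : (Fin n → C) → Fin n → ℕ) (s : Fin n → C) : Prop :=
  ∀ s', Valid A s' → ¬ ProfDev p s s'

/-- A Nash equilibrium: no single player can strictly improve unilaterally. -/
def NashEq {n : ℕ} {C : Type} [DecidableEq C] (A : Fin n → Finset C)
    (p : (Fin n → C) → Fin n → ℕ) (s : Fin n → C) : Prop :=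
  ∀ i, ∀ c ∈ A i, p (Function.update s i c) i ≤ p s i

/-- A single-player profitable deviation: exactly player `i` changes his
strategy and strictly improves. -/
def SingleStep {n : ℕ} {C : Type} (p : (Fin n → C) → Fin n → ℕ)
    (s s' : Fin n → C) : Prop :=
  ∃ i, (∀ j, j ≠ i → s j = s' j) ∧ s i ≠ s' i ∧ p s i < p s' i

open Fin.NatCast Fin.CommRing in
/-- In a coordination game with bonuses on a simple directed cycle, in every
Nash equilibrium each player's payoff is at least the maximum bonus available
to her. Consequently a Nash equilibrium `s` fails to be a strong equilibrium
only if there is a (valid) joint strategy giving every player the payoff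
`max_{c ∈ A i} β i c + 1`, which requires all players to choose one common
colour that is available to every player and has maximal bonus for every
player. -/
theorem cycle_nash_payoff_and_strong_failure {n : ℕ} [NeZero n] (hn : 2 ≤ n)
    {C : Type} [DecidableEq C]
    (A : Fin n → Finset C) (hA : ∀ i, (A i).Nonempty)
    (β : Fin n → C → ℕ)
    (s : Fin n → C) (hs : Valid A s) (hnash : NashEq A (cycPayoff β) s) :
    (∀ i, (A i).sup (β i) ≤ cycPayoff β s i) ∧
    (¬ StrongEq A (cycPayoff β) s →
      ∃ (t : Fin n → C) (c : C), Valid A t ∧ (∀ i, t i = c) ∧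
        (∀ i, c ∈ A i ∧ β i c = (A i).sup (β i)) ∧
        (∀ i, cycPayoff β t i = (A i).sup (β i) + 1)) := by

  have hne : ∀ i : Fin n, i - 1 ≠ i := by
    intro i h
    have h1 : (1 : Fin n) = 0 := sub_eq_self.mp h
    rw [Fin.one_eq_zero_iff] at h1
    omega
  have part1 : ∀ i, (A i).sup (β i) ≤ cycPayoff β s i := by
    intro i
    apply Finset.sup_le
    intro c hc
    have h := hnash i c hc
    unfold cycPayoff at h
    rw [Function.update_self, Function.update_of_ne (hne i)] at h
    calc β i c ≤ β i c + _ := Nat.le_add_right _ _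
      _ ≤ _ := h
  refine ⟨part1, ?_⟩
  intro hns
  unfold StrongEq at hns
  push_neg at hns
  obtain ⟨s', hvalid, hneq, hdev⟩ := hns
  have stepA : ∀ i, s i ≠ s' i → s' (i - 1) = s' i ∧ β i (s' i) = (A i).sup (β i) := by
    intro i hi
    have h := hdev i hi
    have hle : β i (s' i) ≤ (A i).sup (β i) := Finset.le_sup (hvalid i)
    have hp1 := part1 i
    unfold cycPayoff at h hp1
    by_cases heq : s' (i - 1) = s' i
    · rw [if_pos heq] at h
      exact ⟨heq, le_antisymm hle (by omega)⟩
    · rw [if_neg heq] at h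
      omega
  have stepB : ∀ i, s i ≠ s' i → s (i - 1) ≠ s' (i - 1) := by
    intro i hi hcontra
    obtain ⟨hpred, hβ⟩ := stepA i hi
    have hsc : s (i - 1) = s' i := hcontra.trans hpred
    have hnash' := hnash i (s' i) (hvalid i)
    unfold cycPayoff at hnash'
    rw [Function.update_self, Function.update_of_ne (hne i)] at hnash'
    rw [if_pos hsc] at hnash'
    have hind : ¬ s (i - 1) = s i := by rw [hsc]; exact fun h => hi h.symm
    rw [if_neg hind] at hnash'
    have hle2 : β i (s i) ≤ (A i).sup (β i) := Finset.le_sup (hs i)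
    omega
  obtain ⟨i0, hi0⟩ := Function.ne_iff.mp hneq
  have hsub : ∀ m : ℕ, s (i0 - m) ≠ s' (i0 - m) := by
    intro m
    induction m with
    | zero => simpa using hi0
    | succ k ih =>
      have he : (i0 - ((k+1 : ℕ) : Fin n)) = (i0 - (k : ℕ)) - 1 := by
        push_cast
        ring
      rw [he]
      exact stepB _ ih
  have hall : ∀ j, s j ≠ s' j := by
    intro j
    have he : j = i0 - ((i0 - j : Fin n) : ℕ) := by
      rw [Fin.cast_val_eq_self]
      exact (sub_sub_cancel i0 j).symm
    rw [he]
    exact hsub _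
  have hstep : ∀ i : Fin n, s' (i - 1) = s' i := fun i => (stepA i (hall i)).1
  have key : ∀ m : ℕ, s' ((m : ℕ) : Fin n) = s' 0 := by
    intro m
    induction m with
    | zero => norm_num
    | succ k ih =>
      have h2 := hstep ((k : Fin n) + 1)
      rw [add_sub_cancel_right] at h2
      rw [show (((k+1 : ℕ)) : Fin n) = (k : Fin n) + 1 by push_cast; ring, ← h2, ih]
  have hconst : ∀ i, s' i = s' 0 := by
    intro i
    rw [← Fin.cast_val_eq_self i]
    exact key _
  refine ⟨s', s' 0, hvalid, hconst, ?_, ?_⟩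
  · intro i
    have hβ := (stepA i (hall i)).2
    rw [hconst i] at hβ
    refine ⟨?_, hβ⟩
    rw [← hconst i]
    exact hvalid i
  · intro i
    have hβ := (stepA i (hall i)).2
    unfold cycPayoff
    rw [if_pos (hstep i), hβ]
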